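/- Let R > 0 and let μ, μ̃ be Borel probability measures on ℝ^d supported in the closed ball B̄(R). Suppose π is a coupling of μ and μ̃ and C ≥ 0 is such that ‖x − y‖ ≤ C for π-almost every (x, y). Then for every z ∈ ℝ^d one has ‖γ(z, μ) − γ(z, μ̃)‖ ≤ (1 + 2R‖z‖) · C. In other words, γ(z, ·) is Lipschitz with the non-exponential constant (1 + 2R‖z‖) with respect to the ∞-Wasserstein distance on probability measures supported in B̄(R). -/

import Mathlib

open MeasureTheory
open scoped RealInnerProductSpace

/-- The normalisation constant `γ₂(z, μ) = ∫ exp⟨z,y⟩ dμ(y)`. -/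
noncomputable def gamma2 {d : ℕ} (z : EuclideanSpace ℝ (Fin d))
    (μ : Measure (EuclideanSpace ℝ (Fin d))) : ℝ :=
  ∫ y, Real.exp ⟪z, y⟫ ∂μ

/-- The attention map `γ(z, μ) = (∫ exp⟨z,y⟩ • y dμ(y)) / γ₂(z, μ)`. -/
noncomputable def gammaAttn {d : ℕ} (z : EuclideanSpace ℝ (Fin d))
    (μ : Measure (EuclideanSpace ℝ (Fin d))) : EuclideanSpace ℝ (Fin d) :=
  (gamma2 z μ)⁻¹ • ∫ y, Real.exp ⟪z, y⟫ • y ∂μ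

/- ### Auxiliary lemmas -/

lemma exp_key' {u : ℝ} (hu : 0 ≤ u) : Real.exp u - 1 ≤ u * (Real.exp u + 1) / 2 := by
  set h : ℝ → ℝ := fun u => u * (Real.exp u + 1) / 2 - (Real.exp u - 1) with hh
  have H : ∀ x : ℝ, HasDerivAt h ((Real.exp x + 1 + x * Real.exp x) / 2 - Real.exp x) x := by
    intro x
    have h1 : HasDerivAt (fun x : ℝ => x * (Real.exp x + 1))
        (1 * (Real.exp x + 1) + x * Real.exp x) x :=
      (hasDerivAt_id x).mul ((Real.hasDerivAt_exp x).add_const 1)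
    have : HasDerivAt h ((1 * (Real.exp x + 1) + x * Real.exp x) / 2 - Real.exp x) x :=
      (h1.div_const 2).sub ((Real.hasDerivAt_exp x).sub_const 1)
    convert this using 1
    ring
  have hmono : Monotone h := by
    apply monotone_of_deriv_nonneg (fun x => (H x).differentiableAt)
    intro x
    rw [(H x).deriv]
    have hx : 1 - x ≤ Real.exp (-x) := by simpa [add_comm] using Real.add_one_le_exp (-x)
    have := mul_le_mul_of_nonneg_left hx (Real.exp_pos x).le
    rw [← Real.exp_add] at this
    simp only [add_neg_cancel, Real.exp_zero] at this
    nlinarith [Real.exp_pos x]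
  have := hmono hu
  simp only [hh] at this
  simp at this
  linarith [this]

/-- Hermite–Hadamard for `exp`. -/
lemma exp_hh' (s t : ℝ) : |Real.exp s - Real.exp t| ≤ |s - t| * (Real.exp s + Real.exp t) / 2 := by
  wlog h : t ≤ s generalizing s t
  · rw [abs_sub_comm, abs_sub_comm s t]
    have := this t s (le_of_not_ge h)
    linarith
  have hu : 0 ≤ s - t := by linarith
  have key := exp_key' hu
  have hexp : Real.exp s = Real.exp t * Real.exp (s - t) := by
    rw [← Real.exp_add]; ring_nf
  have h1 : Real.exp s - Real.exp t = Real.exp t * (Real.exp (s - t) - 1) := by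
    rw [hexp]; ring
  rw [abs_of_nonneg hu, abs_of_nonneg]
  · rw [h1, hexp]
    have := mul_le_mul_of_nonneg_left key (Real.exp_pos t).le
    nlinarith [Real.exp_pos t]
  · rw [h1]
    have : 1 ≤ Real.exp (s - t) := Real.one_le_exp hu
    nlinarith [Real.exp_pos t]

/-- The core pointwise estimate. -/
lemma core_bound {d : ℕ} (R C : ℝ) (hR : 0 ≤ R) (hC : 0 ≤ C)
    (z x y x' y' : EuclideanSpace ℝ (Fin d))
    (hx : ‖x‖ ≤ R) (hy : ‖y‖ ≤ R) (hy' : ‖y'‖ ≤ R)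
    (hxy : ‖x - y‖ ≤ C) (hxy' : ‖x' - y'‖ ≤ C) :
    ‖Real.exp ⟪z, x⟫ • (Real.exp ⟪z, y'⟫ • x) - Real.exp ⟪z, y⟫ • (Real.exp ⟪z, x'⟫ • y)
      + Real.exp ⟪z, y⟫ • (Real.exp ⟪z, x'⟫ • x') - Real.exp ⟪z, x⟫ • (Real.exp ⟪z, y'⟫ • y')‖
    ≤ (1 + 2 * R * ‖z‖) * C *
      (Real.exp ⟪z, x⟫ * Real.exp ⟪z, y'⟫ + Real.exp ⟪z, x'⟫ * Real.exp ⟪z, y⟫) := by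
  set a : ℝ := Real.exp ⟪z, x⟫ * Real.exp ⟪z, y'⟫ with ha
  set b : ℝ := Real.exp ⟪z, x'⟫ * Real.exp ⟪z, y⟫ with hb
  have hid : Real.exp ⟪z, x⟫ • (Real.exp ⟪z, y'⟫ • x) - Real.exp ⟪z, y⟫ • (Real.exp ⟪z, x'⟫ • y)
      + Real.exp ⟪z, y⟫ • (Real.exp ⟪z, x'⟫ • x') - Real.exp ⟪z, x⟫ • (Real.exp ⟪z, y'⟫ • y')
      = a • (x - y) + b • (x' - y') + (a - b) • (y - y') := by
    simp only [ha, hb]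
    module
  rw [hid]
  have htri : ‖a • (x - y) + b • (x' - y') + (a - b) • (y - y')‖
      ≤ |a| * ‖x - y‖ + |b| * ‖x' - y'‖ + |a - b| * ‖y - y'‖ := by
    calc ‖a • (x - y) + b • (x' - y') + (a - b) • (y - y')‖
        ≤ ‖a • (x - y) + b • (x' - y')‖ + ‖(a - b) • (y - y')‖ := norm_add_le _ _
      _ ≤ ‖a • (x - y)‖ + ‖b • (x' - y')‖ + ‖(a - b) • (y - y')‖ :=
          add_le_add_left (norm_add_le _ _) _
      _ = |a| * ‖x - y‖ + |b| * ‖x' - y'‖ + |a - b| * ‖y - y'‖ := by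
          simp [norm_smul, Real.norm_eq_abs]
  have ha_pos : 0 < a := mul_pos (Real.exp_pos _) (Real.exp_pos _)
  have hb_pos : 0 < b := mul_pos (Real.exp_pos _) (Real.exp_pos _)
  have hyy' : ‖y - y'‖ ≤ 2 * R := by
    calc ‖y - y'‖ ≤ ‖y‖ + ‖y'‖ := norm_sub_le _ _
      _ ≤ 2 * R := by linarith
  have hab : |a - b| ≤ ‖z‖ * C * (a + b) := by
    have ha' : a = Real.exp (⟪z, x⟫ + ⟪z, y'⟫) := by rw [Real.exp_add]
    have hb' : b = Real.exp (⟪z, x'⟫ + ⟪z, y⟫) := by rw [Real.exp_add]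
    rw [ha', hb']
    have hst : |⟪z, x⟫ + ⟪z, y'⟫ - (⟪z, x'⟫ + ⟪z, y⟫)| ≤ 2 * (‖z‖ * C) := by
      have h1 : ⟪z, x⟫ + ⟪z, y'⟫ - (⟪z, x'⟫ + ⟪z, y⟫) = ⟪z, x - y⟫ - ⟪z, x' - y'⟫ := by
        simp [inner_sub_right]; ring
      rw [h1]
      have h2 : |⟪z, x - y⟫| ≤ ‖z‖ * C := by
        calc |⟪z, x - y⟫| ≤ ‖z‖ * ‖x - y‖ := abs_real_inner_le_norm _ _
          _ ≤ ‖z‖ * C := by gcongr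
      have h3 : |⟪z, x' - y'⟫| ≤ ‖z‖ * C := by
        calc |⟪z, x' - y'⟫| ≤ ‖z‖ * ‖x' - y'‖ := abs_real_inner_le_norm _ _
          _ ≤ ‖z‖ * C := by gcongr
      calc |⟪z, x - y⟫ - ⟪z, x' - y'⟫| ≤ |⟪z, x - y⟫| + |⟪z, x' - y'⟫| := abs_sub _ _
        _ ≤ 2 * (‖z‖ * C) := by linarith
    calc |Real.exp (⟪z, x⟫ + ⟪z, y'⟫) - Real.exp (⟪z, x'⟫ + ⟪z, y⟫)|
        ≤ |⟪z, x⟫ + ⟪z, y'⟫ - (⟪z, x'⟫ + ⟪z, y⟫)| *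
            (Real.exp (⟪z, x⟫ + ⟪z, y'⟫) + Real.exp (⟪z, x'⟫ + ⟪z, y⟫)) / 2 := exp_hh' _ _
      _ ≤ 2 * (‖z‖ * C) * (Real.exp (⟪z, x⟫ + ⟪z, y'⟫) + Real.exp (⟪z, x'⟫ + ⟪z, y⟫)) / 2 := by
          gcongr
      _ = ‖z‖ * C * (Real.exp (⟪z, x⟫ + ⟪z, y'⟫) + Real.exp (⟪z, x'⟫ + ⟪z, y⟫)) := by ring
  have habs : |a| = a := abs_of_pos ha_pos
  have hbabs : |b| = b := abs_of_pos hb_pos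
  have hnz : (0:ℝ) ≤ ‖z‖ := norm_nonneg z
  have hab0 : 0 ≤ |a - b| := abs_nonneg _
  calc ‖a • (x - y) + b • (x' - y') + (a - b) • (y - y')‖
      ≤ |a| * ‖x - y‖ + |b| * ‖x' - y'‖ + |a - b| * ‖y - y'‖ := htri
    _ ≤ a * C + b * C + (‖z‖ * C * (a + b)) * (2 * R) := by
        rw [habs, hbabs]
        gcongr
    _ = (1 + 2 * R * ‖z‖) * C * (a + b) := by ring

lemma ball_ae {d : ℕ} {R : ℝ} (ν : Measure (EuclideanSpace ℝ (Fin d)))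
    [IsProbabilityMeasure ν] (hν : ν (Metric.closedBall 0 R) = 1) :
    ∀ᵐ y ∂ν, ‖y‖ ≤ R := by
  have hc : ν (Metric.closedBall (0 : EuclideanSpace ℝ (Fin d)) R)ᶜ = 0 := by
    rw [measure_compl measurableSet_closedBall (measure_ne_top _ _), hν, measure_univ]
    simp
  have hset : {y : EuclideanSpace ℝ (Fin d) | ¬ ‖y‖ ≤ R}
      = (Metric.closedBall (0 : EuclideanSpace ℝ (Fin d)) R)ᶜ := by
    ext y; simp [Metric.mem_closedBall, dist_zero_right]
  rw [ae_iff, hset]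
  exact hc

lemma exp_integrable {d : ℕ} {R : ℝ} (z : EuclideanSpace ℝ (Fin d))
    (ν : Measure (EuclideanSpace ℝ (Fin d))) [IsProbabilityMeasure ν]
    (hν : ν (Metric.closedBall 0 R) = 1) :
    Integrable (fun y => Real.exp ⟪z, y⟫) ν := by
  have hcont : Continuous fun y : EuclideanSpace ℝ (Fin d) => Real.exp ⟪z, y⟫ :=
    Real.continuous_exp.comp (continuous_const.inner continuous_id)
  refine Integrable.mono' (integrable_const (Real.exp (‖z‖ * R)))
    hcont.aestronglyMeasurable ?_
  filter_upwards [ball_ae ν hν] with y hy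
  rw [Real.norm_eq_abs, abs_of_pos (Real.exp_pos _)]
  apply Real.exp_le_exp.mpr
  calc ⟪z, y⟫ ≤ ‖z‖ * ‖y‖ := real_inner_le_norm _ _
    _ ≤ ‖z‖ * R := by
        exact mul_le_mul_of_nonneg_left hy (norm_nonneg z)

lemma exp_smul_integrable {d : ℕ} {R : ℝ} (hR : 0 ≤ R) (z : EuclideanSpace ℝ (Fin d))
    (ν : Measure (EuclideanSpace ℝ (Fin d))) [IsProbabilityMeasure ν]
    (hν : ν (Metric.closedBall 0 R) = 1) :
    Integrable (fun y => Real.exp ⟪z, y⟫ • y) ν := by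
  have hcont : Continuous fun y : EuclideanSpace ℝ (Fin d) => Real.exp ⟪z, y⟫ • y :=
    (Real.continuous_exp.comp (continuous_const.inner continuous_id)).smul continuous_id
  refine Integrable.mono' (integrable_const (Real.exp (‖z‖ * R) * R))
    hcont.aestronglyMeasurable ?_
  filter_upwards [ball_ae ν hν] with y hy
  rw [norm_smul, Real.norm_eq_abs, abs_of_pos (Real.exp_pos _)]
  have h1 : Real.exp ⟪z, y⟫ ≤ Real.exp (‖z‖ * R) := by
    apply Real.exp_le_exp.mpr
    calc ⟪z, y⟫ ≤ ‖z‖ * ‖y‖ := real_inner_le_norm _ _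
      _ ≤ ‖z‖ * R := mul_le_mul_of_nonneg_left hy (norm_nonneg z)
  exact mul_le_mul h1 hy (norm_nonneg y) (Real.exp_pos _).le

lemma gamma2_pos {d : ℕ} {R : ℝ} (z : EuclideanSpace ℝ (Fin d))
    (ν : Measure (EuclideanSpace ℝ (Fin d))) [IsProbabilityMeasure ν]
    (hν : ν (Metric.closedBall 0 R) = 1) :
    0 < gamma2 z ν := by
  have h1 : Real.exp (-(‖z‖ * R)) ≤ gamma2 z ν := by
    rw [gamma2]
    have := integral_mono_ae (integrable_const (Real.exp (-(‖z‖ * R))))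
      (exp_integrable z ν hν) ?_
    · simpa using this
    · filter_upwards [ball_ae ν hν] with y hy
      apply Real.exp_le_exp.mpr
      have : |⟪z, y⟫| ≤ ‖z‖ * R := by
        calc |⟪z, y⟫| ≤ ‖z‖ * ‖y‖ := abs_real_inner_le_norm _ _
          _ ≤ ‖z‖ * R := mul_le_mul_of_nonneg_left hy (norm_nonneg z)
      linarith [(abs_le.mp this).1]
  linarith [Real.exp_pos (-(‖z‖ * R))]

theorem stmt_5 {d : ℕ} (R C : ℝ) (hR : 0 < R) (hC : 0 ≤ C)
    (μ μ' : Measure (EuclideanSpace ℝ (Fin d)))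
    [IsProbabilityMeasure μ] [IsProbabilityMeasure μ']
    (hμ : μ (Metric.closedBall 0 R) = 1) (hμ' : μ' (Metric.closedBall 0 R) = 1)
    (z : EuclideanSpace ℝ (Fin d))
    (π : Measure (EuclideanSpace ℝ (Fin d) × EuclideanSpace ℝ (Fin d)))
    [IsProbabilityMeasure π] (hfst : π.fst = μ) (hsnd : π.snd = μ')
    (hae : ∀ᵐ q ∂π, ‖q.1 - q.2‖ ≤ C) :
    ‖gammaAttn z μ - gammaAttn z μ'‖ ≤ (1 + 2 * R * ‖z‖) * C := by
  set f : EuclideanSpace ℝ (Fin d) → ℝ := fun y => Real.exp ⟪z, y⟫ with hf_def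
  have hf_cont : Continuous f := Real.continuous_exp.comp (continuous_const.inner continuous_id)
  have hfy_cont : Continuous fun y : EuclideanSpace ℝ (Fin d) => f y • y := hf_cont.smul continuous_id
  set A : ℝ := gamma2 z μ with hA_def
  set B : ℝ := gamma2 z μ' with hB_def
  set Vμ : EuclideanSpace ℝ (Fin d) := ∫ y, f y • y ∂μ with hVμ_def
  set Vμ' : EuclideanSpace ℝ (Fin d) := ∫ y, f y • y ∂μ' with hVμ'_def
  have hA_pos : 0 < A := gamma2_pos z μ hμ
  have hB_pos : 0 < B := gamma2_pos z μ' hμ'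
  have hmapfst : π.map Prod.fst = μ := hfst
  have hmapsnd : π.map Prod.snd = μ' := hsnd
  -- integrability over μ, μ'
  have hfμ : Integrable f μ := exp_integrable z μ hμ
  have hfμ' : Integrable f μ' := exp_integrable z μ' hμ'
  have hfyμ : Integrable (fun y => f y • y) μ := exp_smul_integrable hR.le z μ hμ
  have hfyμ' : Integrable (fun y => f y • y) μ' := exp_smul_integrable hR.le z μ' hμ'
  -- pullbacks to π
  have hπf1 : Integrable (fun q : (EuclideanSpace ℝ (Fin d)) × (EuclideanSpace ℝ (Fin d)) => f q.1) π := by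
    have h1 : Integrable f (π.map Prod.fst) := by rwa [hmapfst]
    exact (integrable_map_measure hf_cont.aestronglyMeasurable
      measurable_fst.aemeasurable).mp h1
  have hπf2 : Integrable (fun q : (EuclideanSpace ℝ (Fin d)) × (EuclideanSpace ℝ (Fin d)) => f q.2) π := by
    have h1 : Integrable f (π.map Prod.snd) := by rwa [hmapsnd]
    exact (integrable_map_measure hf_cont.aestronglyMeasurable
      measurable_snd.aemeasurable).mp h1
  have hπv1 : Integrable (fun q : (EuclideanSpace ℝ (Fin d)) × (EuclideanSpace ℝ (Fin d)) => f q.1 • q.1) π := by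
    have h1 : Integrable (fun y => f y • y) (π.map Prod.fst) := by rwa [hmapfst]
    exact (integrable_map_measure hfy_cont.aestronglyMeasurable
      measurable_fst.aemeasurable).mp h1
  have hπv2 : Integrable (fun q : (EuclideanSpace ℝ (Fin d)) × (EuclideanSpace ℝ (Fin d)) => f q.2 • q.2) π := by
    have h1 : Integrable (fun y => f y • y) (π.map Prod.snd) := by rwa [hmapsnd]
    exact (integrable_map_measure hfy_cont.aestronglyMeasurable
      measurable_snd.aemeasurable).mp h1
  have hA' : ∫ q : (EuclideanSpace ℝ (Fin d)) × (EuclideanSpace ℝ (Fin d)), f q.1 ∂π = A := by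
    rw [hA_def, gamma2, ← hmapfst,
      integral_map measurable_fst.aemeasurable hf_cont.aestronglyMeasurable]
  have hB' : ∫ q : (EuclideanSpace ℝ (Fin d)) × (EuclideanSpace ℝ (Fin d)), f q.2 ∂π = B := by
    rw [hB_def, gamma2, ← hmapsnd,
      integral_map measurable_snd.aemeasurable hf_cont.aestronglyMeasurable]
  have hV1 : ∫ q : (EuclideanSpace ℝ (Fin d)) × (EuclideanSpace ℝ (Fin d)), f q.1 • q.1 ∂π = Vμ := by
    rw [hVμ_def, ← hmapfst,
      integral_map measurable_fst.aemeasurable hfy_cont.aestronglyMeasurable]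
  have hV2 : ∫ q : (EuclideanSpace ℝ (Fin d)) × (EuclideanSpace ℝ (Fin d)), f q.2 • q.2 ∂π = Vμ' := by
    rw [hVμ'_def, ← hmapsnd,
      integral_map measurable_snd.aemeasurable hfy_cont.aestronglyMeasurable]
  -- the inner integrand
  set G : (EuclideanSpace ℝ (Fin d)) × (EuclideanSpace ℝ (Fin d)) → (EuclideanSpace ℝ (Fin d)) × (EuclideanSpace ℝ (Fin d)) → EuclideanSpace ℝ (Fin d) := fun q q' =>
    f q.1 • (f q'.2 • q.1) - f q.2 • (f q'.1 • q.2)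
      + f q.2 • (f q'.1 • q'.1) - f q.1 • (f q'.2 • q'.2) with hG_def
  -- inner integral computation
  have inner_eq : ∀ q : (EuclideanSpace ℝ (Fin d)) × (EuclideanSpace ℝ (Fin d)), ∫ q', G q q' ∂π
      = B • (f q.1 • q.1) - A • (f q.2 • q.2) + f q.2 • Vμ - f q.1 • Vμ' := by
    intro q
    have i1 : Integrable (fun q' : (EuclideanSpace ℝ (Fin d)) × (EuclideanSpace ℝ (Fin d)) => f q.1 • (f q'.2 • q.1)) π := by
      exact ((hπf2.smul_const q.1).smul (f q.1))
    have i2 : Integrable (fun q' : (EuclideanSpace ℝ (Fin d)) × (EuclideanSpace ℝ (Fin d)) => f q.2 • (f q'.1 • q.2)) π := by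
      exact ((hπf1.smul_const q.2).smul (f q.2))
    have i3 : Integrable (fun q' : (EuclideanSpace ℝ (Fin d)) × (EuclideanSpace ℝ (Fin d)) => f q.2 • (f q'.1 • q'.1)) π := by
      exact (hπv1.smul (f q.2))
    have i4 : Integrable (fun q' : (EuclideanSpace ℝ (Fin d)) × (EuclideanSpace ℝ (Fin d)) => f q.1 • (f q'.2 • q'.2)) π := by
      exact (hπv2.smul (f q.1))
    have e1 : ∫ q' : (EuclideanSpace ℝ (Fin d)) × (EuclideanSpace ℝ (Fin d)), f q.1 • (f q'.2 • q.1) ∂π = f q.1 • (B • q.1) := by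
      rw [integral_smul, integral_smul_const, hB']
    have e2 : ∫ q' : (EuclideanSpace ℝ (Fin d)) × (EuclideanSpace ℝ (Fin d)), f q.2 • (f q'.1 • q.2) ∂π = f q.2 • (A • q.2) := by
      rw [integral_smul, integral_smul_const, hA']
    have e3 : ∫ q' : (EuclideanSpace ℝ (Fin d)) × (EuclideanSpace ℝ (Fin d)), f q.2 • (f q'.1 • q'.1) ∂π = f q.2 • Vμ := by
      rw [integral_smul, hV1]
    have e4 : ∫ q' : (EuclideanSpace ℝ (Fin d)) × (EuclideanSpace ℝ (Fin d)), f q.1 • (f q'.2 • q'.2) ∂π = f q.1 • Vμ' := by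
      rw [integral_smul, hV2]
    have i12 : Integrable (fun q' : (EuclideanSpace ℝ (Fin d)) × (EuclideanSpace ℝ (Fin d)) =>
        f q.1 • (f q'.2 • q.1) - f q.2 • (f q'.1 • q.2)) π := i1.sub i2
    have i123 : Integrable (fun q' : (EuclideanSpace ℝ (Fin d)) × (EuclideanSpace ℝ (Fin d)) =>
        f q.1 • (f q'.2 • q.1) - f q.2 • (f q'.1 • q.2) + f q.2 • (f q'.1 • q'.1)) π := i12.add i3
    simp only [hG_def]
    rw [integral_sub i123 i4, integral_add i12 i3, integral_sub i1 i2, e1, e2, e3, e4]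
    module
  -- the explicit formula for the inner integral
  set F : (EuclideanSpace ℝ (Fin d)) × (EuclideanSpace ℝ (Fin d)) → EuclideanSpace ℝ (Fin d) := fun q =>
    B • (f q.1 • q.1) - A • (f q.2 • q.2) + f q.2 • Vμ - f q.1 • Vμ' with hF_def
  -- outer integral value
  have hI_val : ∫ q, F q ∂π = B • Vμ - A • Vμ' + B • Vμ - A • Vμ' := by
    have j1 : Integrable (fun q : (EuclideanSpace ℝ (Fin d)) × (EuclideanSpace ℝ (Fin d)) => B • (f q.1 • q.1)) π := hπv1.smul B
    have j2 : Integrable (fun q : (EuclideanSpace ℝ (Fin d)) × (EuclideanSpace ℝ (Fin d)) => A • (f q.2 • q.2)) π := hπv2.smul A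
    have j3 : Integrable (fun q : (EuclideanSpace ℝ (Fin d)) × (EuclideanSpace ℝ (Fin d)) => f q.2 • Vμ) π := hπf2.smul_const Vμ
    have j4 : Integrable (fun q : (EuclideanSpace ℝ (Fin d)) × (EuclideanSpace ℝ (Fin d)) => f q.1 • Vμ') π := hπf1.smul_const Vμ'
    have j12 : Integrable (fun q : (EuclideanSpace ℝ (Fin d)) × (EuclideanSpace ℝ (Fin d)) =>
        B • (f q.1 • q.1) - A • (f q.2 • q.2)) π := j1.sub j2
    have j123 : Integrable (fun q : (EuclideanSpace ℝ (Fin d)) × (EuclideanSpace ℝ (Fin d)) =>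
        B • (f q.1 • q.1) - A • (f q.2 • q.2) + f q.2 • Vμ) π := j12.add j3
    simp only [hF_def]
    rw [integral_sub j123 j4, integral_add j12 j3, integral_sub j1 j2,
      integral_smul, integral_smul, integral_smul_const,
      integral_smul_const, hV1, hV2, hA', hB']
  -- a.e. membership of marginals in the ball
  have haefst : ∀ᵐ q ∂π, ‖q.1‖ ≤ R := by
    have hc : μ (Metric.closedBall (0 : EuclideanSpace ℝ (Fin d)) R)ᶜ = 0 := by
      rw [measure_compl measurableSet_closedBall (measure_ne_top _ _), hμ, measure_univ]
      simp
    have hset : {q : (EuclideanSpace ℝ (Fin d)) × (EuclideanSpace ℝ (Fin d)) | ¬ ‖q.1‖ ≤ R}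
        = Prod.fst ⁻¹' (Metric.closedBall (0 : EuclideanSpace ℝ (Fin d)) R)ᶜ := by
      ext q; simp [Metric.mem_closedBall, dist_zero_right]
    rw [ae_iff, hset, ← Measure.fst_apply measurableSet_closedBall.compl, hfst]
    exact hc
  have haesnd : ∀ᵐ q ∂π, ‖q.2‖ ≤ R := by
    have hc : μ' (Metric.closedBall (0 : EuclideanSpace ℝ (Fin d)) R)ᶜ = 0 := by
      rw [measure_compl measurableSet_closedBall (measure_ne_top _ _), hμ', measure_univ]
      simp
    have hset : {q : (EuclideanSpace ℝ (Fin d)) × (EuclideanSpace ℝ (Fin d)) | ¬ ‖q.2‖ ≤ R}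
        = Prod.snd ⁻¹' (Metric.closedBall (0 : EuclideanSpace ℝ (Fin d)) R)ᶜ := by
      ext q; simp [Metric.mem_closedBall, dist_zero_right]
    rw [ae_iff, hset, ← Measure.snd_apply measurableSet_closedBall.compl, hsnd]
    exact hc
  have hcore : ∀ᵐ q ∂π, ‖q.1 - q.2‖ ≤ C ∧ ‖q.1‖ ≤ R ∧ ‖q.2‖ ≤ R :=
    hae.and (haefst.and haesnd)
  set K : ℝ := (1 + 2 * R * ‖z‖) * C with hK_def
  -- the norm bound on the outer integral
  have hgf_int : Integrable (fun q : (EuclideanSpace ℝ (Fin d)) × (EuclideanSpace ℝ (Fin d)) => K * (f q.1 * B + A * f q.2)) π :=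
    (((hπf1.mul_const B).add (hπf2.const_mul A)).const_mul K)
  have hnorm_bound : ‖∫ q, F q ∂π‖ ≤ ∫ q : (EuclideanSpace ℝ (Fin d)) × (EuclideanSpace ℝ (Fin d)), K * (f q.1 * B + A * f q.2) ∂π := by
    apply norm_integral_le_of_norm_le hgf_int
    filter_upwards [hcore] with q hq
    obtain ⟨hq1, hq2, hq3⟩ := hq
    rw [hF_def]
    simp only
    rw [← inner_eq q]
    have hdom_int : Integrable (fun q' : (EuclideanSpace ℝ (Fin d)) × (EuclideanSpace ℝ (Fin d)) => K * (f q.1 * f q'.2 + f q'.1 * f q.2)) π :=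
      (((hπf2.const_mul (f q.1)).add (hπf1.mul_const (f q.2))).const_mul K)
    have hdom_val : ∫ q' : (EuclideanSpace ℝ (Fin d)) × (EuclideanSpace ℝ (Fin d)), K * (f q.1 * f q'.2 + f q'.1 * f q.2) ∂π
        = K * (f q.1 * B + A * f q.2) := by
      rw [integral_const_mul, integral_add (hπf2.const_mul (f q.1)) (hπf1.mul_const (f q.2)),
        integral_const_mul, integral_mul_const, hA', hB']
    rw [← hdom_val]
    apply norm_integral_le_of_norm_le hdom_int
    filter_upwards [hcore] with q' hq'
    obtain ⟨hq'1, hq'2, hq'3⟩ := hq'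
    rw [hG_def]
    simp only
    have := core_bound R C hR.le hC z q.1 q.2 q'.1 q'.2 hq2 hq3 hq'3 hq1 hq'1
    simpa [hK_def, mul_comm] using this
  have hgf_val : ∫ q : (EuclideanSpace ℝ (Fin d)) × (EuclideanSpace ℝ (Fin d)), K * (f q.1 * B + A * f q.2) ∂π = K * (2 * A * B) := by
    rw [integral_const_mul, integral_add (hπf1.mul_const B) (hπf2.const_mul A),
      integral_mul_const, integral_const_mul, hA', hB']
    ring
  -- relate the difference of attention maps to the outer integral
  have hdiff : gammaAttn z μ - gammaAttn z μ' = (2 * A * B)⁻¹ • ∫ q, F q ∂π := by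
    rw [hI_val, gammaAttn, gammaAttn, ← hA_def, ← hB_def, ← hVμ_def, ← hVμ'_def]
    have hA0 : A ≠ 0 := ne_of_gt hA_pos
    have hB0 : B ≠ 0 := ne_of_gt hB_pos
    match_scalars
    all_goals field_simp
    all_goals ring
  rw [hdiff, norm_smul, Real.norm_eq_abs,
    abs_of_pos (by positivity : (0:ℝ) < (2 * A * B)⁻¹)]
  calc (2 * A * B)⁻¹ * ‖∫ q, F q ∂π‖
      ≤ (2 * A * B)⁻¹ * (K * (2 * A * B)) := by
        apply mul_le_mul_of_nonneg_left _ (by positivity)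
        rw [← hgf_val]
        exact hnorm_bound
    _ = K := by field_simp
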